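/- Let β be a positive integer and m ≥ 1 a real number. Let x_1,…,x_{2β} be i.i.d. arcsine-distributed random variables and h a Nakagami-m amplitude independent of them. Then for any reals ε₁, ε₂, the harvested DC without a correlator for the unmodulated chaotic symbol satisfies ε₁·E[h²·Σ_{k=1}^{2β} x_k²] + ε₂·E[h⁴·Σ_{k=1}^{2β} x_k⁴] = ε₁·β + ε₂·(3(1+m)/(4m))·β. -/

import Mathlib

open MeasureTheory ProbabilityTheory
open scoped ENNReal

/-- The arcsine (Chebyshev invariant) distribution on (−1,1), with density
1/(π√(1−x²)) for |x| < 1 and 0 otherwise. -/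
noncomputable def arcsineMeasure : Measure ℝ :=
  volume.withDensity fun x =>
    ENNReal.ofReal (if |x| < 1 then 1 / (Real.pi * Real.sqrt (1 - x ^ 2)) else 0)

/-- The uniform distribution on {−1, +1}. -/
noncomputable def rademacherMeasure : Measure ℝ :=
  (1 / 2 : ℝ≥0∞) • Measure.dirac (-1) + (1 / 2 : ℝ≥0∞) • Measure.dirac 1

/-- The distribution of a unit-mean-power Nakagami-m amplitude, with density
2 m^m z^{2m−1} e^{−m z²}/Γ(m) for z ≥ 0 and 0 otherwise. -/
noncomputable def nakagamiMeasure (m : ℝ) : Measure ℝ :=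
  volume.withDensity fun z =>
    ENNReal.ofReal (if 0 ≤ z then
      2 * m ^ m * z ^ (2 * m - 1) * Real.exp (-m * z ^ 2) / Real.Gamma m else 0)

section Auxiliary

open Set Real
open scoped NNReal

lemma integral_withDensity_ofReal' {d : ℝ → ℝ} (hd : Measurable d) (hd0 : ∀ x, 0 ≤ d x)
    (f : ℝ → ℝ) :
    ∫ x, f x ∂(volume.withDensity fun x => ENNReal.ofReal (d x)) = ∫ x, d x * f x := by
  have h : (fun x => ENNReal.ofReal (d x)) = fun x => ((d x).toNNReal : ℝ≥0∞) := rfl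
  rw [h, integral_withDensity_eq_integral_smul hd.real_toNNReal]
  simp_rw [NNReal.smul_def, Real.coe_toNNReal _ (hd0 _), smul_eq_mul]

lemma integrable_withDensity_ofReal' {d : ℝ → ℝ} (hd : Measurable d) (hd0 : ∀ x, 0 ≤ d x)
    (f : ℝ → ℝ) :
    Integrable f (volume.withDensity fun x => ENNReal.ofReal (d x)) ↔
      Integrable (fun x => d x * f x) volume := by
  have h : (fun x => ENNReal.ofReal (d x)) = fun x => ((d x).toNNReal : ℝ≥0∞) := rfl
  rw [h, integrable_withDensity_iff_integrable_smul hd.real_toNNReal]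
  simp_rw [NNReal.smul_def, Real.coe_toNNReal _ (hd0 _), smul_eq_mul]

lemma arcsine_density_meas :
    Measurable (fun x : ℝ => if |x| < 1 then 1 / (Real.pi * Real.sqrt (1 - x ^ 2)) else 0) := by
  apply Measurable.ite
  · exact measurableSet_lt (measurable_abs) measurable_const
  · fun_prop
  · exact measurable_const

lemma arcsine_density_nonneg (x : ℝ) :
    0 ≤ (if |x| < 1 then 1 / (Real.pi * Real.sqrt (1 - x ^ 2)) else 0) := by
  split
  · positivity
  · exact le_refl 0

lemma hasDerivAt_sqrt_one_sub_sq {x : ℝ} (hx : x ∈ Ioo (-1:ℝ) 1) :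
    HasDerivAt (fun y : ℝ => √(1 - y ^ 2)) (-x / √(1 - x ^ 2)) x := by
  have h1 : (0:ℝ) < 1 - x ^ 2 := by nlinarith [hx.1, hx.2]
  have := (Real.hasDerivAt_sqrt (ne_of_gt h1)).comp x ((hasDerivAt_pow 2 x).const_sub 1)
  refine this.congr_deriv ?_
  have hs : √(1 - x ^ 2) ≠ 0 := by positivity
  field_simp
  ring

lemma deriv_F2 {x : ℝ} (hx : x ∈ Ioo (-1:ℝ) 1) :
    HasDerivAt (fun y : ℝ => (arcsin y - y * √(1 - y ^ 2)) / (2 * π))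
      (x ^ 2 / (π * √(1 - x ^ 2))) x := by
  have h1 : (0:ℝ) < 1 - x ^ 2 := by nlinarith [hx.1, hx.2]
  have hs : √(1 - x ^ 2) ≠ 0 := by positivity
  have hs2 : √(1 - x ^ 2) ^ 2 = 1 - x ^ 2 := Real.sq_sqrt h1.le
  have harcsin : HasDerivAt arcsin (1 / √(1 - x ^ 2)) x :=
    Real.hasDerivAt_arcsin hx.1.ne' hx.2.ne
  have := (harcsin.sub ((hasDerivAt_id x).mul (hasDerivAt_sqrt_one_sub_sq hx))).div_const (2 * π)
  refine this.congr_deriv ?_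
  have hπ : π ≠ 0 := Real.pi_ne_zero
  simp only [id_eq]
  have hs4 : √(1 - x ^ 2) ^ 4 = (1 - x ^ 2) ^ 2 := by
    rw [show (4:ℕ) = 2*2 from rfl, pow_mul, hs2]
  field_simp
  ring_nf
  all_goals simp only [hs2, hs4]
  all_goals ring

lemma deriv_F4 {x : ℝ} (hx : x ∈ Ioo (-1:ℝ) 1) :
    HasDerivAt (fun y : ℝ => (3 * arcsin y - 3 * (y * √(1 - y ^ 2))
        - 2 * (y ^ 3 * √(1 - y ^ 2))) / (8 * π))
      (x ^ 4 / (π * √(1 - x ^ 2))) x := by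
  have h1 : (0:ℝ) < 1 - x ^ 2 := by nlinarith [hx.1, hx.2]
  have hs : √(1 - x ^ 2) ≠ 0 := by positivity
  have hs2 : √(1 - x ^ 2) ^ 2 = 1 - x ^ 2 := Real.sq_sqrt h1.le
  have harcsin : HasDerivAt arcsin (1 / √(1 - x ^ 2)) x :=
    Real.hasDerivAt_arcsin hx.1.ne' hx.2.ne
  have hsq := hasDerivAt_sqrt_one_sub_sq hx
  have := (((harcsin.const_mul 3).sub
      (((hasDerivAt_id x).mul hsq).const_mul 3)).sub
      (((hasDerivAt_pow 3 x).mul hsq).const_mul 2)).div_const (8 * π)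
  refine this.congr_deriv ?_
  have hπ : π ≠ 0 := Real.pi_ne_zero
  simp only [id_eq]
  have hs4 : √(1 - x ^ 2) ^ 4 = (1 - x ^ 2) ^ 2 := by
    rw [show (4:ℕ) = 2*2 from rfl, pow_mul, hs2]
  have hs3 : √(1 - x ^ 2) ^ 3 = (1 - x ^ 2) * √(1 - x ^ 2) := by
    rw [show (3:ℕ) = 2+1 from rfl, pow_succ, hs2]
  field_simp
  ring_nf
  all_goals simp only [hs2, hs3, hs4]
  all_goals ring

lemma arcsine_moment {n : ℕ} {F : ℝ → ℝ} (hF : Continuous F)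
    (hder : ∀ x ∈ Ioo (-1:ℝ) 1, HasDerivAt F (x ^ n / (π * √(1 - x ^ 2))) x)
    (hev : Even n) :
    Integrable (fun x => x ^ n) arcsineMeasure ∧
      ∫ x, x ^ n ∂arcsineMeasure = F 1 - F (-1) := by
  set g' : ℝ → ℝ := fun x => x ^ n / (π * √(1 - x ^ 2)) with hg'
  have hpos : ∀ x ∈ Ioo (-1:ℝ) 1, 0 ≤ g' x := by
    intro x hx
    have : (0:ℝ) ≤ x ^ n := hev.pow_nonneg x
    positivity
  have hint : IntegrableOn g' (Ioc (-1:ℝ) 1) :=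
    intervalIntegral.integrableOn_deriv_of_nonneg hF.continuousOn hder hpos
  have hkey : (fun x : ℝ => (if |x| < 1 then 1 / (π * √(1 - x ^ 2)) else 0) * x ^ n)
      = Set.indicator (Ioo (-1:ℝ) 1) g' := by
    funext x
    by_cases hx : |x| < 1
    · rw [abs_lt] at hx
      rw [if_pos (abs_lt.2 hx), Set.indicator_of_mem (by exact hx : x ∈ Ioo (-1:ℝ) 1)]
      simp [hg', div_eq_mul_inv, mul_comm]
    · rw [if_neg hx, Set.indicator_of_notMem (by rwa [mem_Ioo, ← abs_lt]), zero_mul]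
  have hintind : Integrable (Set.indicator (Ioo (-1:ℝ) 1) g') volume :=
    (hint.mono_set Ioo_subset_Ioc_self).integrable_indicator measurableSet_Ioo
  constructor
  · rw [arcsineMeasure, integrable_withDensity_ofReal' arcsine_density_meas arcsine_density_nonneg]
    rw [hkey]; exact hintind
  · rw [arcsineMeasure, integral_withDensity_ofReal' arcsine_density_meas arcsine_density_nonneg]
    rw [hkey, integral_indicator measurableSet_Ioo, ← integral_Ioc_eq_integral_Ioo,
      ← intervalIntegral.integral_of_le (by norm_num : (-1:ℝ) ≤ 1)]
    exact intervalIntegral.integral_eq_sub_of_hasDeriv_right_of_le (by norm_num)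
      hF.continuousOn (fun x hx => (hder x hx).hasDerivWithinAt)
      ((intervalIntegrable_iff_integrableOn_Ioc_of_le (by norm_num)).2 hint)

lemma arcsine_sq : Integrable (fun x : ℝ => x ^ 2) arcsineMeasure ∧
    ∫ x, x ^ 2 ∂arcsineMeasure = 1 / 2 := by
  have hF : Continuous (fun y : ℝ => (arcsin y - y * √(1 - y ^ 2)) / (2 * π)) :=
    (Real.continuous_arcsin.sub (continuous_id.mul
      ((continuous_const.sub (continuous_pow 2)).sqrt))).div_const _
  obtain ⟨h1, h2⟩ := arcsine_moment hF (fun x hx => deriv_F2 hx) even_two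
  refine ⟨h1, ?_⟩
  rw [h2]
  have e1 : √(1 - (1:ℝ) ^ 2) = 0 := by norm_num
  have e2 : √(1 - (-1:ℝ) ^ 2) = 0 := by norm_num
  rw [e1, e2, Real.arcsin_one, Real.arcsin_neg, Real.arcsin_one]
  have hπ : π ≠ 0 := Real.pi_ne_zero
  field_simp
  ring

lemma arcsine_p4 : Integrable (fun x : ℝ => x ^ 4) arcsineMeasure ∧
    ∫ x, x ^ 4 ∂arcsineMeasure = 3 / 8 := by
  have hF : Continuous (fun y : ℝ => (3 * arcsin y - 3 * (y * √(1 - y ^ 2))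
      - 2 * (y ^ 3 * √(1 - y ^ 2))) / (8 * π)) :=
    (((continuous_const.mul Real.continuous_arcsin).sub (continuous_const.mul
      (continuous_id.mul ((continuous_const.sub (continuous_pow 2)).sqrt)))).sub
      (continuous_const.mul ((continuous_pow 3).mul
      ((continuous_const.sub (continuous_pow 2)).sqrt)))).div_const _
  obtain ⟨h1, h2⟩ := arcsine_moment hF (fun x hx => deriv_F4 hx) (by decide : Even 4)
  refine ⟨h1, ?_⟩
  rw [h2]
  have e1 : √(1 - (1:ℝ) ^ 2) = 0 := by norm_num
  have e2 : √(1 - (-1:ℝ) ^ 2) = 0 := by norm_num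
  rw [e1, e2, Real.arcsin_one, Real.arcsin_neg, Real.arcsin_one]
  have hπ : π ≠ 0 := Real.pi_ne_zero
  field_simp
  ring

section nak
variable {m : ℝ}

lemma nakagami_density_meas (m : ℝ) :
    Measurable (fun z : ℝ => if 0 ≤ z then
      2 * m ^ m * z ^ (2 * m - 1) * Real.exp (-m * z ^ 2) / Real.Gamma m else 0) := by
  apply Measurable.ite (measurableSet_le measurable_const measurable_id)
  · fun_prop
  · exact measurable_const

lemma nakagami_density_nonneg (hm : 1 ≤ m) (z : ℝ) :
    0 ≤ (if 0 ≤ z then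
      2 * m ^ m * z ^ (2 * m - 1) * Real.exp (-m * z ^ 2) / Real.Gamma m else 0) := by
  have hm0 : (0:ℝ) < m := lt_of_lt_of_le one_pos hm
  split
  · rename_i hz
    have h1 : (0:ℝ) ≤ m ^ m := Real.rpow_nonneg hm0.le _
    have h2 : (0:ℝ) ≤ z ^ (2 * m - 1) := Real.rpow_nonneg hz _
    have h3 : (0:ℝ) < Real.Gamma m := Real.Gamma_pos_of_pos hm0
    positivity
  · exact le_refl 0

lemma nakagami_moment (hm : 1 ≤ m) (n : ℕ) :
    Integrable (fun z => z ^ n) (nakagamiMeasure m) ∧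
      ∫ z, z ^ n ∂(nakagamiMeasure m)
        = m ^ (-(n:ℝ)/2) * Real.Gamma (m + (n:ℝ)/2) / Real.Gamma m := by
  have hm0 : (0:ℝ) < m := lt_of_lt_of_le one_pos hm
  have hΓ : (0:ℝ) < Real.Gamma m := Real.Gamma_pos_of_pos hm0
  set c : ℝ := 2 * m ^ m / Real.Gamma m with hc
  set G : ℝ → ℝ := fun z => z ^ (2 * m - 1 + n) * Real.exp (-m * z ^ (2:ℝ)) with hG
  have hq : (-1:ℝ) < 2 * m - 1 + n := by
    have : (0:ℝ) ≤ (n:ℝ) := Nat.cast_nonneg n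
    linarith
  have hGint : IntegrableOn G (Ioi (0:ℝ)) :=
    integrableOn_rpow_mul_exp_neg_mul_rpow hq two_pos hm0
  have hkey : (fun z : ℝ => (if 0 ≤ z then
      2 * m ^ m * z ^ (2 * m - 1) * Real.exp (-m * z ^ 2) / Real.Gamma m else 0) * z ^ n)
      = Set.indicator (Ici (0:ℝ)) (fun z => c * G z) := by
    funext z
    by_cases hz : 0 ≤ z
    · rw [if_pos hz, Set.indicator_of_mem (by exact hz)]
      rcases eq_or_lt_of_le hz with hz0 | hz0
      · have hne : 2 * m - 1 ≠ 0 := by linarith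
        have hne2 : 2 * m - 1 + (n:ℝ) ≠ 0 := by
          have : (0:ℝ) ≤ (n:ℝ) := Nat.cast_nonneg n
          linarith
        simp only [hG, ← hz0, Real.zero_rpow hne, Real.zero_rpow hne2]
        ring
      · have e1 : z ^ (2 * m - 1 + n) = z ^ (2 * m - 1) * z ^ (n:ℕ) := by
          rw [← Real.rpow_natCast z n, ← Real.rpow_add hz0]
        have e2 : z ^ ((2:ℝ)) = z ^ (2:ℕ) := by
          rw [← Real.rpow_natCast z 2]; norm_num
        simp only [hG, e1, e2, hc]
        ring
    · rw [if_neg hz, Set.indicator_of_notMem (by simpa using hz), zero_mul]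
  constructor
  · rw [nakagamiMeasure, integrable_withDensity_ofReal' (nakagami_density_meas m)
      (nakagami_density_nonneg hm), hkey]
    apply (IntegrableOn.integrable_indicator ?_ measurableSet_Ici)
    rw [integrableOn_Ici_iff_integrableOn_Ioi]
    exact (hGint.const_mul c)
  · rw [nakagamiMeasure, integral_withDensity_ofReal' (nakagami_density_meas m)
      (nakagami_density_nonneg hm), hkey, integral_indicator measurableSet_Ici,
      integral_Ici_eq_integral_Ioi, integral_const_mul,
      integral_rpow_mul_exp_neg_mul_rpow two_pos hq hm0]
    have e3 : -(2 * m - 1 + (n:ℝ) + 1)/2 = -m + (-(n:ℝ)/2) := by ring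
    rw [e3, Real.rpow_add hm0, show (2 * m - 1 + (n:ℝ) + 1)/2 = m + (n:ℝ)/2 by ring, hc]
    have hmm : m ^ m * m ^ (-m) = 1 := by
      rw [← Real.rpow_add hm0]; simp
    set A := Real.Gamma (m + (n:ℝ)/2) with hA
    field_simp
    linear_combination A * hmm

lemma nakagami_sq (hm : 1 ≤ m) :
    Integrable (fun z : ℝ => z ^ 2) (nakagamiMeasure m) ∧
      ∫ z, z ^ 2 ∂(nakagamiMeasure m) = 1 := by
  have hm0 : (0:ℝ) < m := lt_of_lt_of_le one_pos hm
  have hΓ : (0:ℝ) < Real.Gamma m := Real.Gamma_pos_of_pos hm0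
  obtain ⟨h1, h2⟩ := nakagami_moment hm 2
  refine ⟨h1, ?_⟩
  rw [h2]
  rw [show (-((2:ℕ):ℝ)/2) = (-1:ℝ) by norm_num, Real.rpow_neg_one,
    show m + ((2:ℕ):ℝ)/2 = m + 1 by norm_num, Real.Gamma_add_one hm0.ne']
  field_simp

lemma nakagami_p4 (hm : 1 ≤ m) :
    Integrable (fun z : ℝ => z ^ 4) (nakagamiMeasure m) ∧
      ∫ z, z ^ 4 ∂(nakagamiMeasure m) = (1 + m) / m := by
  have hm0 : (0:ℝ) < m := lt_of_lt_of_le one_pos hm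
  have hΓ : (0:ℝ) < Real.Gamma m := Real.Gamma_pos_of_pos hm0
  obtain ⟨h1, h2⟩ := nakagami_moment hm 4
  refine ⟨h1, ?_⟩
  rw [h2]
  have hm1 : m + 1 ≠ 0 := by positivity
  rw [show (-((4:ℕ):ℝ)/2) = -((2:ℕ):ℝ) by norm_num,
    Real.rpow_neg hm0.le, Real.rpow_natCast,
    show m + ((4:ℕ):ℝ)/2 = (m + 1) + 1 by push_cast; ring,
    Real.Gamma_add_one hm1, Real.Gamma_add_one hm0.ne']
  field_simp
  ring

end nak

end Auxiliary

/-- harvested DC without a correlator for an unmodulated chaotic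
symbol over a Nakagami-m channel:
ε₁E[h²Σx_k²] + ε₂E[h⁴Σx_k⁴] = ε₁β + ε₂(3(1+m)/(4m))β. -/
theorem stmt_7 {Ω : Type*} [MeasurableSpace Ω] (P : Measure Ω) [IsProbabilityMeasure P]
    (β : ℕ) (hβ : 0 < β) (m : ℝ) (hm : 1 ≤ m)
    (x : Fin (2 * β) → Ω → ℝ) (h : Ω → ℝ)
    (hxmeas : ∀ k, Measurable (x k)) (hhmeas : Measurable h)
    (hxlaw : ∀ k, Measure.map (x k) P = arcsineMeasure)
    (hhlaw : Measure.map h P = nakagamiMeasure m)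
    (hindep : iIndepFun
      (fun i : Option (Fin (2 * β)) => i.elim h x) P)
    (ε₁ ε₂ : ℝ) :
    ε₁ * (∫ ω, h ω ^ 2 * ∑ k, x k ω ^ 2 ∂P) + ε₂ * (∫ ω, h ω ^ 4 * ∑ k, x k ω ^ 4 ∂P)
      = ε₁ * (β : ℝ) + ε₂ * (3 * (1 + m) / (4 * m)) * (β : ℝ) := by
  have hm0 : (0:ℝ) < m := lt_of_lt_of_le one_pos hm
  -- measurability of powers
  have hp2 : Measurable (fun z : ℝ => z ^ 2) := measurable_id.pow_const 2
  have hp4 : Measurable (fun z : ℝ => z ^ 4) := measurable_id.pow_const 4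
  -- integrability and moments, transported to P
  have hIh2 : Integrable (fun ω => h ω ^ 2) P := by
    have := (integrable_map_measure hp2.aestronglyMeasurable hhmeas.aemeasurable).mp
      (by rw [hhlaw]; exact (nakagami_sq hm).1)
    exact this
  have hIh4 : Integrable (fun ω => h ω ^ 4) P := by
    have := (integrable_map_measure hp4.aestronglyMeasurable hhmeas.aemeasurable).mp
      (by rw [hhlaw]; exact (nakagami_p4 hm).1)
    exact this
  have hIx2 : ∀ k, Integrable (fun ω => x k ω ^ 2) P := fun k => by
    have := (integrable_map_measure hp2.aestronglyMeasurable (hxmeas k).aemeasurable).mp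
      (by rw [hxlaw k]; exact arcsine_sq.1)
    exact this
  have hIx4 : ∀ k, Integrable (fun ω => x k ω ^ 4) P := fun k => by
    have := (integrable_map_measure hp4.aestronglyMeasurable (hxmeas k).aemeasurable).mp
      (by rw [hxlaw k]; exact arcsine_p4.1)
    exact this
  have hEh2 : ∫ ω, h ω ^ 2 ∂P = 1 := by
    have : ∫ z, z ^ 2 ∂(Measure.map h P) = ∫ ω, h ω ^ 2 ∂P :=
      integral_map hhmeas.aemeasurable hp2.aestronglyMeasurable
    rw [hhlaw, (nakagami_sq hm).2] at this
    exact this.symm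
  have hEh4 : ∫ ω, h ω ^ 4 ∂P = (1 + m) / m := by
    have : ∫ z, z ^ 4 ∂(Measure.map h P) = ∫ ω, h ω ^ 4 ∂P :=
      integral_map hhmeas.aemeasurable hp4.aestronglyMeasurable
    rw [hhlaw, (nakagami_p4 hm).2] at this
    exact this.symm
  have hEx2 : ∀ k, ∫ ω, x k ω ^ 2 ∂P = 1 / 2 := fun k => by
    have : ∫ z, z ^ 2 ∂(Measure.map (x k) P) = ∫ ω, x k ω ^ 2 ∂P :=
      integral_map (hxmeas k).aemeasurable hp2.aestronglyMeasurable
    rw [hxlaw k, arcsine_sq.2] at this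
    exact this.symm
  have hEx4 : ∀ k, ∫ ω, x k ω ^ 4 ∂P = 3 / 8 := fun k => by
    have : ∫ z, z ^ 4 ∂(Measure.map (x k) P) = ∫ ω, x k ω ^ 4 ∂P :=
      integral_map (hxmeas k).aemeasurable hp4.aestronglyMeasurable
    rw [hxlaw k, arcsine_p4.2] at this
    exact this.symm
  -- independence
  have hIndep : ∀ k, IndepFun h (x k) P := fun k =>
    hindep.indepFun (show (none : Option (Fin (2 * β))) ≠ some k by simp)
  have hInd2 : ∀ k, IndepFun (fun ω => h ω ^ 2) (fun ω => x k ω ^ 2) P := fun k =>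
    (hIndep k).comp hp2 hp2
  have hInd4 : ∀ k, IndepFun (fun ω => h ω ^ 4) (fun ω => x k ω ^ 4) P := fun k =>
    (hIndep k).comp hp4 hp4
  -- compute the two expectations
  have key2 : ∫ ω, h ω ^ 2 * ∑ k, x k ω ^ 2 ∂P = (2 * β : ℝ) * (1 * (1 / 2)) := by
    have e : (fun ω => h ω ^ 2 * ∑ k, x k ω ^ 2)
        = fun ω => ∑ k, h ω ^ 2 * x k ω ^ 2 := by
      funext ω; rw [Finset.mul_sum]
    have hsum := integral_finset_sum (μ := P) Finset.univ
      (f := fun (k : Fin (2 * β)) (ω : Ω) => h ω ^ 2 * x k ω ^ 2)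
      (fun k _ => (hInd2 k).integrable_mul hIh2 (hIx2 k))
    rw [e, hsum]
    have e2 : ∀ k ∈ Finset.univ, ∫ ω, h ω ^ 2 * x k ω ^ 2 ∂P = 1 * (1 / 2) := by
      intro k _
      have := (hInd2 k).integral_mul_eq_mul_integral hIh2.aestronglyMeasurable (hIx2 k).aestronglyMeasurable
      rw [← hEx2 k, ← hEh2]
      exact this
    rw [Finset.sum_congr rfl e2, Finset.sum_const, Finset.card_univ, Fintype.card_fin]
    push_cast
    ring
  have key4 : ∫ ω, h ω ^ 4 * ∑ k, x k ω ^ 4 ∂P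
      = (2 * β : ℝ) * ((1 + m) / m * (3 / 8)) := by
    have e : (fun ω => h ω ^ 4 * ∑ k, x k ω ^ 4)
        = fun ω => ∑ k, h ω ^ 4 * x k ω ^ 4 := by
      funext ω; rw [Finset.mul_sum]
    have hsum := integral_finset_sum (μ := P) Finset.univ
      (f := fun (k : Fin (2 * β)) (ω : Ω) => h ω ^ 4 * x k ω ^ 4)
      (fun k _ => (hInd4 k).integrable_mul hIh4 (hIx4 k))
    rw [e, hsum]
    have e2 : ∀ k ∈ Finset.univ, ∫ ω, h ω ^ 4 * x k ω ^ 4 ∂P = (1 + m) / m * (3 / 8) := by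
      intro k _
      have := (hInd4 k).integral_mul_eq_mul_integral hIh4.aestronglyMeasurable (hIx4 k).aestronglyMeasurable
      rw [← hEh4, ← hEx4 k]
      exact this
    rw [Finset.sum_congr rfl e2, Finset.sum_const, Finset.card_univ, Fintype.card_fin]
    push_cast
    ring
  rw [key2, key4]
  field_simp
  ring
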